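/- For any graph G on M vertices with independence number α(G), and any bipartite d-covering H_1,…,H_η of G, the normalized capacity (1/M)·∑_i |V(H_i)| is at least 2d/α(G) − 2d/M. -/

import Mathlib

open Finset SimpleGraph

/-- A finset of vertices is independent in `G`. -/
def IsIndepSet {V : Type*} (G : SimpleGraph V) (s : Finset V) : Prop :=
  ∀ u ∈ s, ∀ v ∈ s, u ≠ v → ¬ G.Adj u v

/-- The independence number of `G`. -/
noncomputable def indepNum {V : Type*} [Fintype V] (G : SimpleGraph V) : ℕ :=
  sSup {n | ∃ s : Finset V, _root_.IsIndepSet G s ∧ s.card = n}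

lemma aux_indep_bddAbove {V : Type*} [Fintype V] (G : SimpleGraph V) :
    BddAbove {n | ∃ s : Finset V, _root_.IsIndepSet G s ∧ s.card = n} := by
  refine ⟨Fintype.card V, fun n hn => ?_⟩
  obtain ⟨s, -, rfl⟩ := hn
  simpa using s.card_le_univ

lemma aux_one_le_indepNum {V : Type*} [Fintype V] [Nonempty V] (G : SimpleGraph V) :
    1 ≤ _root_.indepNum G := by
  apply le_csSup (aux_indep_bddAbove G)
  refine ⟨{Classical.arbitrary V}, ?_, card_singleton _⟩
  intro u hu v hv huv
  simp only [mem_singleton] at hu hv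
  exact absurd (hu.trans hv.symm) huv

lemma aux_compl_cliqueFree {V : Type*} [Fintype V] (G : SimpleGraph V) :
    Gᶜ.CliqueFree (_root_.indepNum G + 1) := by
  intro t ht
  have h1 : _root_.IsIndepSet G t := fun u hu v hv huv => (ht.1 hu hv huv).2
  have h2 : _root_.indepNum G + 1 ≤ _root_.indepNum G :=
    le_csSup (aux_indep_bddAbove G) ⟨t, h1, ht.2⟩
  omega

/-- Edge count of the Turán graph. -/
lemma aux_turan_count (n r : ℕ) (hr : 1 ≤ r) :
    2 * ((turanGraph n r).edgeFinset.card : ℝ) ≤ (n : ℝ)^2 - (n : ℝ)^2 / r := by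
  classical
  set g : Fin n → ℕ := fun v => (v : ℕ) % r with hg
  set c : ℕ → ℕ := fun j => #(univ.filter fun w : Fin n => g w = j) with hc
  have hmaps : ∀ v : Fin n, v ∈ (univ : Finset (Fin n)) → g v ∈ Finset.range r :=
    fun v _ => mem_range.2 (Nat.mod_lt _ hr)
  have hdeg : ∀ v : Fin n, (turanGraph n r).degree v = n - c (g v) := by
    intro v
    rw [← card_neighborFinset_eq_degree, neighborFinset_eq_filter]
    have key : c (g v)
        + #(univ.filter fun w : Fin n => ¬ g w = g v) = n := by
      rw [hc]
      rw [card_filter_add_card_filter_not]; simp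
    have : (univ.filter fun w : Fin n => (turanGraph n r).Adj v w)
        = univ.filter fun w : Fin n => ¬ g w = g v := by
      apply filter_congr
      intro w _
      simp only [turanGraph, hg, ne_eq, eq_comm]
    rw [this]
    omega
  have hsum : ∑ v : Fin n, (turanGraph n r).degree v = 2 * #(turanGraph n r).edgeFinset :=
    (turanGraph n r).sum_degrees_eq_twice_card_edges
  have hcle : ∀ v : Fin n, c (g v) ≤ n := by
    intro v; simpa using card_filter_le univ (fun w : Fin n => g w = g v)
  have hE : 2 * #(turanGraph n r).edgeFinset + ∑ v : Fin n, c (g v) = n * n := by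
    rw [← hsum]
    have : ∑ v : Fin n, ((turanGraph n r).degree v + c (g v)) = ∑ v : Fin n, n := by
      apply Finset.sum_congr rfl
      intro v _
      rw [hdeg v]
      have := hcle v
      omega
    simp only [Finset.sum_add_distrib] at this
    simp only [Finset.sum_const, card_univ, Fintype.card_fin, smul_eq_mul, mul_one] at this
    omega
  -- fiberwise identities
  have hfib : ∑ v : Fin n, c (g v) = ∑ j ∈ Finset.range r, c j * c j := by
    rw [← Finset.sum_fiberwise_of_maps_to hmaps (fun v => c (g v))]
    apply Finset.sum_congr rfl
    intro j _
    have : ∑ v ∈ univ.filter (fun v => g v = j), c (g v)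
        = ∑ v ∈ univ.filter (fun v => g v = j), c j := by
      apply Finset.sum_congr rfl
      intro v hv
      rw [(mem_filter.1 hv).2]
    rw [this, Finset.sum_const, smul_eq_mul]
  have hfib2 : ∑ j ∈ Finset.range r, c j = n := by
    have := Finset.card_eq_sum_card_fiberwise hmaps
    simpa using this.symm
  -- Cauchy-Schwarz in ℝ
  have hcs : ((n : ℝ))^2 ≤ (r : ℝ) * ∑ j ∈ Finset.range r, (c j : ℝ)^2 := by
    have := sq_sum_le_card_mul_sum_sq (s := Finset.range r) (f := fun j => (c j : ℝ))
    rw [← Nat.cast_sum, hfib2] at this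
    simpa using this
  have hEr : 2 * (#(turanGraph n r).edgeFinset : ℝ)
      = (n : ℝ)^2 - ∑ j ∈ Finset.range r, (c j : ℝ)^2 := by
    have := congrArg (fun k : ℕ => (k : ℝ)) hE
    push_cast [hfib] at this
    have h2 : ∑ j ∈ Finset.range r, (c j : ℝ) * (c j : ℝ)
        = ∑ j ∈ Finset.range r, (c j : ℝ)^2 := by
      apply Finset.sum_congr rfl; intro j _; ring
    rw [h2] at this
    nlinarith [this]
  rw [hEr]
  have hr' : (0 : ℝ) < r := by exact_mod_cast hr
  rw [sub_le_sub_iff_left, div_le_iff₀ hr']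
  nlinarith [hcs]

/-- Turán-type bound: `M² ≤ α(G) · (2|E(G)| + M)`. -/
lemma aux_turan_bound {M : ℕ} (hM : 1 ≤ M) (G : SimpleGraph (Fin M))
    [DecidableRel G.Adj] :
    (M : ℝ)^2 ≤ (_root_.indepNum G : ℝ) * (2 * #G.edgeFinset + M) := by
  classical
  have : Nonempty (Fin M) := Fin.pos_iff_nonempty.1 hM
  set a := _root_.indepNum G with ha
  have ha1 : 1 ≤ a := aux_one_le_indepNum G
  obtain ⟨H, hdec, hmax⟩ := SimpleGraph.exists_isTuranMaximal (V := Fin M) (r := a) ha1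
  have hle : #Gᶜ.edgeFinset ≤ #H.edgeFinset := hmax.2 (aux_compl_cliqueFree G)
  obtain ⟨f⟩ := hmax.nonempty_iso_turanGraph
  have hiso : #H.edgeFinset = #(turanGraph (Fintype.card (Fin M)) a).edgeFinset := by
    rw [SimpleGraph.edgeFinset_card, SimpleGraph.edgeFinset_card]
    exact Fintype.card_congr f.mapEdgeSet
  rw [Fintype.card_fin] at hiso
  have hTuran : 2 * ((#Gᶜ.edgeFinset : ℕ) : ℝ) ≤ (M : ℝ)^2 - (M : ℝ)^2 / a := by
    calc 2 * ((#Gᶜ.edgeFinset : ℕ) : ℝ) ≤ 2 * ((#(turanGraph M a).edgeFinset : ℕ) : ℝ) := by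
          have : (#Gᶜ.edgeFinset : ℝ) ≤ #(turanGraph M a).edgeFinset := by
            exact_mod_cast hle.trans_eq hiso
          linarith
      _ ≤ (M : ℝ)^2 - (M : ℝ)^2 / a := aux_turan_count M a ha1
  -- edge counts of G and its complement sum to M choose 2
  have hcompl : #G.edgeFinset + #Gᶜ.edgeFinset = M.choose 2 := by
    have hu : G.edgeFinset ∪ Gᶜ.edgeFinset = (⊤ : SimpleGraph (Fin M)).edgeFinset := by
      ext e
      refine e.ind fun u v => ?_
      simp only [Finset.mem_union, SimpleGraph.mem_edgeFinset, SimpleGraph.mem_edgeSet,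
        SimpleGraph.compl_adj, SimpleGraph.top_adj]
      constructor
      · rintro (h | ⟨h, -⟩)
        · exact h.ne
        · exact h
      · intro h
        by_cases hA : G.Adj u v
        · exact Or.inl hA
        · exact Or.inr ⟨h, hA⟩
    rw [← card_union_of_disjoint (SimpleGraph.disjoint_edgeFinset.2 disjoint_compl_right), hu,
      SimpleGraph.card_edgeFinset_top_eq_card_choose_two, Fintype.card_fin]
  have hchoose : (M.choose 2 : ℝ) * 2 = (M : ℝ) * (M - 1) := by
    have hdvd : 2 ∣ M * (M - 1) := by
      rcases Nat.even_or_odd M with h | h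
      · exact Dvd.dvd.mul_right h.two_dvd _
      · have he : Even (M - 1) := by rcases h with ⟨k, hk⟩; exact ⟨k, by omega⟩
        exact Dvd.dvd.mul_left he.two_dvd _
    have : M.choose 2 * 2 = M * (M - 1) := by
      rw [Nat.choose_two_right, Nat.div_mul_cancel hdvd]
    calc (M.choose 2 : ℝ) * 2 = ((M.choose 2 * 2 : ℕ) : ℝ) := by push_cast; ring
      _ = ((M * (M-1) : ℕ) : ℝ) := by rw [this]
      _ = (M : ℝ) * ((M : ℝ) - 1) := by
          push_cast [Nat.cast_sub hM]; ring
  have ha0 : (0 : ℝ) < a := by exact_mod_cast ha1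
  have hEc : (#G.edgeFinset : ℝ) + #Gᶜ.edgeFinset = M.choose 2 := by exact_mod_cast hcompl
  have key : (M : ℝ)^2 / a ≤ 2 * #G.edgeFinset + M := by nlinarith
  calc (M : ℝ)^2 = ((M : ℝ)^2 / (a : ℝ)) * (a : ℝ) := by field_simp
    _ ≤ (2 * (#G.edgeFinset : ℝ) + (M : ℝ)) * (a : ℝ) :=
        mul_le_mul_of_nonneg_right key ha0.le
    _ = (a : ℝ) * (2 * (#G.edgeFinset : ℝ) + (M : ℝ)) := by ring

/-- Covering double count: `2·d·|E| ≤ ∑ 2·|Aᵢ||Bᵢ|`. -/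
lemma aux_cover_count (M η d : ℕ) (G : SimpleGraph (Fin M)) [DecidableRel G.Adj]
    (A B : Fin η → Finset (Fin M))
    (hcov : ∀ u v : Fin M, G.Adj u v →
      d ≤ (Finset.univ.filter
        (fun i => (u ∈ A i ∧ v ∈ B i) ∨ (u ∈ B i ∧ v ∈ A i))).card) :
    d * (2 * #G.edgeFinset) ≤ ∑ i, 2 * (#(A i) * #(B i)) := by
  classical
  set s : Finset (Fin M × Fin M) := univ.filter fun p => G.Adj p.1 p.2 with hs
  have hscard : #s = 2 * #G.edgeFinset := by
    rw [← G.sum_degrees_eq_twice_card_edges, hs, Finset.card_filter]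
    rw [Fintype.sum_prod_type]
    apply Finset.sum_congr rfl
    intro u _
    rw [← card_neighborFinset_eq_degree, neighborFinset_eq_filter, Finset.card_filter]
  have step1 : d * #s ≤ ∑ p ∈ s, #(Finset.univ.filter
      (fun i => (p.1 ∈ A i ∧ p.2 ∈ B i) ∨ (p.1 ∈ B i ∧ p.2 ∈ A i))) :=
    calc d * #s = ∑ _p ∈ s, d := by rw [Finset.sum_const, smul_eq_mul, mul_comm]
      _ ≤ _ := Finset.sum_le_sum fun p hp => hcov p.1 p.2 (mem_filter.1 hp).2
  have step2 : ∑ p ∈ s, #(Finset.univ.filter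
      (fun i => (p.1 ∈ A i ∧ p.2 ∈ B i) ∨ (p.1 ∈ B i ∧ p.2 ∈ A i)))
      = ∑ i, #(s.filter (fun p => (p.1 ∈ A i ∧ p.2 ∈ B i) ∨ (p.1 ∈ B i ∧ p.2 ∈ A i))) := by
    simp only [Finset.card_filter]
    rw [Finset.sum_comm]
  have step3 : ∀ i, #(s.filter (fun p => (p.1 ∈ A i ∧ p.2 ∈ B i) ∨ (p.1 ∈ B i ∧ p.2 ∈ A i)))
      ≤ 2 * (#(A i) * #(B i)) := by
    intro i
    have hsub : s.filter (fun p => (p.1 ∈ A i ∧ p.2 ∈ B i) ∨ (p.1 ∈ B i ∧ p.2 ∈ A i))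
        ⊆ (A i ×ˢ B i) ∪ (B i ×ˢ A i) := by
      intro p hp
      rcases (mem_filter.1 hp).2 with ⟨h1, h2⟩ | ⟨h1, h2⟩
      · exact mem_union_left _ (mem_product.2 ⟨h1, h2⟩)
      · exact mem_union_right _ (mem_product.2 ⟨h1, h2⟩)
    calc #(s.filter (fun p => (p.1 ∈ A i ∧ p.2 ∈ B i) ∨ (p.1 ∈ B i ∧ p.2 ∈ A i)))
        ≤ #((A i ×ˢ B i) ∪ (B i ×ˢ A i)) := card_le_card hsub
      _ ≤ #(A i ×ˢ B i) + #(B i ×ˢ A i) := card_union_le _ _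
      _ = 2 * (#(A i) * #(B i)) := by rw [card_product, card_product]; ring
  calc d * (2 * #G.edgeFinset) = d * #s := by rw [hscard]
    _ ≤ _ := step1
    _ = _ := step2
    _ ≤ ∑ i, 2 * (#(A i) * #(B i)) := Finset.sum_le_sum fun i _ => step3 i

/-- for any bipartite `d`-covering of a graph `G` on `M` vertices, the
normalized capacity `(1/M)·∑_i |V(H_i)|` is at least `2d/α(G) − 2d/M`. -/
theorem normalized_capacity_lower_bound (M η d : ℕ) (hM : 1 ≤ M)
    (G : SimpleGraph (Fin M))
    (A B : Fin η → Finset (Fin M)) (hdisj : ∀ i, Disjoint (A i) (B i))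
    (hcov : ∀ u v : Fin M, G.Adj u v →
      d ≤ (Finset.univ.filter
        (fun i => (u ∈ A i ∧ v ∈ B i) ∨ (u ∈ B i ∧ v ∈ A i))).card) :
    (2 * d : ℝ) / _root_.indepNum G - (2 * d : ℝ) / M ≤
      (1 / M : ℝ) * ∑ i, ((A i).card + (B i).card : ℝ) := by
  classical
  have hne : Nonempty (Fin M) := Fin.pos_iff_nonempty.1 hM
  have ha1 : 1 ≤ _root_.indepNum G := aux_one_le_indepNum G
  have hT := aux_turan_bound hM G
  have hC := aux_cover_count M η d G A B hcov
  have hM0 : (0 : ℝ) < M := by exact_mod_cast hM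
  have ha0 : (0 : ℝ) < (_root_.indepNum G : ℝ) := by exact_mod_cast ha1
  have hd0 : (0 : ℝ) ≤ d := Nat.cast_nonneg d
  have hE0 : (0 : ℝ) ≤ (#G.edgeFinset : ℝ) := Nat.cast_nonneg _
  have hab : ∀ i, 4 * ((#(A i) : ℝ) * #(B i)) ≤ (M : ℝ) * (#(A i) + #(B i)) := by
    intro i
    have h1n : #(A i) + #(B i) ≤ M := by
      rw [← card_union_of_disjoint (hdisj i)]
      simpa using card_le_univ (A i ∪ B i)
    have h1 : (#(A i) : ℝ) + #(B i) ≤ M := by exact_mod_cast h1n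
    nlinarith [sq_nonneg ((#(A i) : ℝ) - #(B i)), Nat.cast_nonneg (α := ℝ) (#(A i)),
      Nat.cast_nonneg (α := ℝ) (#(B i))]
  have hC' : (d : ℝ) * (2 * #G.edgeFinset) ≤ ∑ i, 2 * ((#(A i) : ℝ) * #(B i)) := by
    exact_mod_cast hC
  have hS : ∑ i, 2 * ((#(A i) : ℝ) * #(B i))
      ≤ (M : ℝ) / 2 * ∑ i, ((A i).card + (B i).card : ℝ) := by
    rw [Finset.mul_sum]
    apply Finset.sum_le_sum
    intro i _
    have := hab i
    linarith
  have hCS := hC'.trans hS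
  rw [div_sub_div _ _ ha0.ne' hM0.ne', one_div_mul_eq_div,
    div_le_div_iff₀ (by positivity) hM0]
  nlinarith [mul_le_mul_of_nonneg_left hT (by positivity : (0:ℝ) ≤ 2 * d),
    mul_le_mul_of_nonneg_left hCS (by positivity : (0:ℝ) ≤ 2 * (_root_.indepNum G : ℝ)),
    mul_pos ha0 hM0, mul_nonneg hd0 hM0.le]
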